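/- Let {X_k} be i.i.d. symmetric random variables with partial sums S_k. Then for all u>0 and n≥2: P(max_{1≤k≤n−1} S_k > u, S_n ≤ u) ≤ P(S_n > u) − P(max_{1≤k≤n−1} S_k ≤ u, S_n > u). -/

import Mathlib

open MeasureTheory ProbabilityTheory Finset

section Aux

variable {Ω : Type*} [MeasurableSpace Ω] (μ : Measure Ω) [IsProbabilityMeasure μ]
  (X : ℕ → Ω → ℝ)

set_option linter.unusedSectionVars false in
lemma aux_map_neg (hXmeas : ∀ k, Measurable (X k))
    (hXid : ∀ k, Measure.map (X k) μ = Measure.map (X 0) μ)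
    (hXsym : Measure.map (X 0) μ = Measure.map (fun ω => -X 0 ω) μ) (k : ℕ) :
    Measure.map (fun ω => -X k ω) μ = Measure.map (X k) μ := by
  have h : ∀ m : ℕ, Measure.map (fun ω => -X m ω) μ
      = Measure.map (fun x : ℝ => -x) (Measure.map (X m) μ) := fun m => by
    rw [Measure.map_map measurable_neg (hXmeas m)]; rfl
  rw [h k, hXid k, ← h 0, ← hXsym, ← hXid k]

lemma aux_sum_symm (hXmeas : ∀ k, Measurable (X k))
    (hXindep : iIndepFun X μ)
    (hXid : ∀ k, Measure.map (X k) μ = Measure.map (X 0) μ)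
    (hXsym : Measure.map (X 0) μ = Measure.map (fun ω => -X 0 ω) μ) (s : Finset ℕ) :
    Measure.map (fun ω => ∑ i ∈ s, X i ω) μ
      = Measure.map (fun ω => -∑ i ∈ s, X i ω) μ := by
  classical
  induction s using Finset.induction_on with
  | empty => simp
  | @insert a s ha ih =>
    have hT : Measurable (fun ω => ∑ i ∈ s, X i ω) :=
      Finset.measurable_sum _ fun i _ => hXmeas i
    have hind : IndepFun (X a) (fun ω => ∑ i ∈ s, X i ω) μ := by
      have h1 := hXindep.indepFun_finsetSum_of_notMem hXmeas ha
      have heq : (∑ j ∈ s, X j) = (fun ω => ∑ i ∈ s, X i ω) := by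
        funext ω; simp [Finset.sum_apply]
      rw [heq] at h1
      exact h1.symm
    have hneg : IndepFun (fun ω => -X a ω) (fun ω => -∑ i ∈ s, X i ω) μ :=
      hind.comp measurable_neg measurable_neg
    have h1 := (indepFun_iff_map_prod_eq_prod_map_map (hXmeas a).aemeasurable
      hT.aemeasurable).mp hind
    have h2 := (indepFun_iff_map_prod_eq_prod_map_map (hXmeas a).neg.aemeasurable
      hT.neg.aemeasurable).mp hneg
    have key : Measure.map (fun ω => X a ω + ∑ i ∈ s, X i ω) μ
        = Measure.map (fun ω => -X a ω + -∑ i ∈ s, X i ω) μ := by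
      have hm1 : Measurable (fun p : ℝ × ℝ => p.1 + p.2) := measurable_add
      calc Measure.map (fun ω => X a ω + ∑ i ∈ s, X i ω) μ
          = Measure.map (fun p : ℝ × ℝ => p.1 + p.2)
              (Measure.map (fun ω => (X a ω, ∑ i ∈ s, X i ω)) μ) := by
            rw [Measure.map_map hm1 ((hXmeas a).prodMk hT)]; rfl
        _ = Measure.map (fun p : ℝ × ℝ => p.1 + p.2)
              ((Measure.map (X a) μ).prod (Measure.map (fun ω => ∑ i ∈ s, X i ω) μ)) := by
            rw [h1]
        _ = Measure.map (fun p : ℝ × ℝ => p.1 + p.2)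
              ((Measure.map (fun ω => -X a ω) μ).prod
                (Measure.map (fun ω => -∑ i ∈ s, X i ω) μ)) := by
            rw [aux_map_neg μ X hXmeas hXid hXsym a, ih]
        _ = Measure.map (fun p : ℝ × ℝ => p.1 + p.2)
              (Measure.map (fun ω => (-X a ω, -∑ i ∈ s, X i ω)) μ) := by
            exact congrArg (Measure.map (fun p : ℝ × ℝ => p.1 + p.2)) h2.symm
        _ = Measure.map (fun ω => -X a ω + -∑ i ∈ s, X i ω) μ := by
            rw [Measure.map_map (f := fun ω => (-X a ω, -∑ i ∈ s, X i ω)) hm1 (((hXmeas a).neg).prodMk hT.neg)]; rfl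
    have e1 : (fun ω => ∑ i ∈ insert a s, X i ω) = fun ω => X a ω + ∑ i ∈ s, X i ω := by
      funext ω; rw [Finset.sum_insert ha]
    have e2 : (fun ω => -∑ i ∈ insert a s, X i ω) = fun ω => -X a ω + -∑ i ∈ s, X i ω := by
      funext ω; rw [Finset.sum_insert ha, neg_add]
    rw [e1, e2]
    exact key

lemma aux_lt_gt (hXmeas : ∀ k, Measurable (X k))
    (hXindep : iIndepFun X μ)
    (hXid : ∀ k, Measure.map (X k) μ = Measure.map (X 0) μ)
    (hXsym : Measure.map (X 0) μ = Measure.map (fun ω => -X 0 ω) μ) (s : Finset ℕ) :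
    μ {ω | ∑ i ∈ s, X i ω < 0} = μ {ω | 0 < ∑ i ∈ s, X i ω} := by
  have hT : Measurable (fun ω => ∑ i ∈ s, X i ω) :=
    Finset.measurable_sum _ fun i _ => hXmeas i
  have h := aux_sum_symm μ X hXmeas hXindep hXid hXsym s
  have h1 : μ {ω | ∑ i ∈ s, X i ω < 0}
      = Measure.map (fun ω => ∑ i ∈ s, X i ω) μ (Set.Iio 0) := by
    rw [Measure.map_apply hT measurableSet_Iio]; rfl
  have h2 : Measure.map (fun ω => -∑ i ∈ s, X i ω) μ (Set.Iio 0)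
      = μ {ω | 0 < ∑ i ∈ s, X i ω} := by
    rw [Measure.map_apply (f := fun ω => -∑ i ∈ s, X i ω) hT.neg measurableSet_Iio]
    congr 1
    ext ω
    simp [neg_lt_zero]
  rw [h1, h, h2]

lemma aux_key (hXmeas : ∀ k, Measurable (X k))
    (hXindep : iIndepFun X μ)
    (hXid : ∀ k, Measure.map (X k) μ = Measure.map (X 0) μ)
    (hXsym : Measure.map (X 0) μ = Measure.map (fun ω => -X 0 ω) μ)
    (u : ℝ) (n j : ℕ) (hj1 : 1 ≤ j) (hjn : j < n) :
    μ ({ω | (∀ k ∈ Icc 1 (j - 1), ∑ i ∈ range k, X i ω ≤ u) ∧ u < ∑ i ∈ range j, X i ω}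
        ∩ {ω | ∑ i ∈ range n, X i ω ≤ u})
      ≤ μ ({ω | (∀ k ∈ Icc 1 (j - 1), ∑ i ∈ range k, X i ω ≤ u) ∧ u < ∑ i ∈ range j, X i ω}
        ∩ {ω | u < ∑ i ∈ range n, X i ω}) := by
  classical
  set B := {ω | (∀ k ∈ Icc 1 (j - 1), ∑ i ∈ range k, X i ω ≤ u)
      ∧ u < ∑ i ∈ range j, X i ω} with hBdef
  set T := fun ω => ∑ i ∈ Ico j n, X i ω with hTdef
  have hT : Measurable T := Finset.measurable_sum _ fun i _ => hXmeas i
  have hsplit : ∀ ω, ∑ i ∈ range n, X i ω = ∑ i ∈ range j, X i ω + T ω := by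
    intro ω
    have h0 : ∑ i ∈ range j, X i ω + ∑ i ∈ Ico j n, X i ω = ∑ i ∈ range n, X i ω := by
      rw [range_eq_Ico, range_eq_Ico]
      exact Finset.sum_Ico_consecutive (fun i => X i ω) (Nat.zero_le j) hjn.le
    simp only [hTdef]
    linarith
  set F := fun ω (i : ↥(range j)) => X i ω with hF
  set G := fun ω (i : ↥(Ico j n)) => X i ω with hG
  have hdisj : Disjoint (range j) (Ico j n) := by
    rw [Finset.disjoint_left]
    intro i hi hi2
    simp only [Finset.mem_range] at hi
    simp only [Finset.mem_Ico] at hi2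
    omega
  have hIndepFG : IndepFun F G μ :=
    hXindep.indepFun_finset (range j) (Ico j n) hdisj hXmeas
  have hσ : Measurable (fun v : (↥(Ico j n) → ℝ) => ∑ i, v i) :=
    Finset.measurable_sum _ fun i _ => measurable_pi_apply i
  have hTG : T = (fun v : (↥(Ico j n) → ℝ) => ∑ i, v i) ∘ G := by
    funext ω
    simp only [Function.comp_apply, hG, hTdef]
    exact (Finset.sum_coe_sort (Ico j n) (fun i => X i ω)).symm
  set m : ℕ → (↥(range j) → ℝ) → ℝ :=
    fun k v => ∑ i : ↥(range j), if (i : ℕ) < k then v i else 0 with hm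
  have hmmeas : ∀ k, Measurable (m k) := by
    intro k
    apply Finset.measurable_sum
    intro i _
    split_ifs
    · exact measurable_pi_apply i
    · exact measurable_const
  have hmF : ∀ k, k ≤ j → ∀ ω, m k (F ω) = ∑ i ∈ range k, X i ω := by
    intro k hk ω
    have h1 : m k (F ω) = ∑ i ∈ range j, if i < k then X i ω else 0 :=
      Finset.sum_coe_sort (range j) (fun i => if i < k then X i ω else 0)
    rw [h1, ← Finset.sum_filter]
    congr 1
    ext i
    simp only [mem_filter, mem_range]
    omega
  set M : Set (↥(range j) → ℝ) :=
    {v | (∀ k ∈ Icc 1 (j - 1), m k v ≤ u) ∧ u < m j v} with hMdef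
  have hMeq : M = (⋂ k ∈ (Icc 1 (j - 1) : Finset ℕ), m k ⁻¹' Set.Iic u)
      ∩ (m j ⁻¹' Set.Ioi u) := by
    ext v
    simp [hMdef, Set.mem_iInter]
  have hM : MeasurableSet M := by
    rw [hMeq]
    exact (MeasurableSet.biInter (Finset.countable_toSet _) fun k _ =>
      (hmmeas k) measurableSet_Iic).inter ((hmmeas j) measurableSet_Ioi)
  have hBF : B = F ⁻¹' M := by
    ext ω
    simp only [hBdef, hMdef, Set.mem_setOf_eq, Set.mem_preimage]
    constructor
    · rintro ⟨h1, h2⟩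
      refine ⟨fun k hk => ?_, ?_⟩
      · rw [hmF k (by simp only [mem_Icc] at hk; omega) ω]
        exact h1 k hk
      · rw [hmF j le_rfl ω]
        exact h2
    · rintro ⟨h1, h2⟩
      refine ⟨fun k hk => ?_, ?_⟩
      · have := h1 k hk
        rwa [hmF k (by simp only [mem_Icc] at hk; omega) ω] at this
      · rwa [hmF j le_rfl ω] at h2
  have hIndepFT : IndepFun F T μ := by
    rw [hTG]
    exact hIndepFG.comp measurable_id hσ
  have key1 : μ (B ∩ {ω | T ω < 0}) = μ B * μ {ω | T ω < 0} := by
    rw [hBF]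
    exact hIndepFT.measure_inter_preimage_eq_mul M (Set.Iio 0) hM measurableSet_Iio
  have key2 : μ (B ∩ {ω | 0 < T ω}) = μ B * μ {ω | 0 < T ω} := by
    rw [hBF]
    exact hIndepFT.measure_inter_preimage_eq_mul M (Set.Ioi 0) hM measurableSet_Ioi
  have hsym : μ {ω | T ω < 0} = μ {ω | 0 < T ω} :=
    aux_lt_gt μ X hXmeas hXindep hXid hXsym (Ico j n)
  have hsub1 : B ∩ {ω | ∑ i ∈ range n, X i ω ≤ u} ⊆ B ∩ {ω | T ω < 0} := by
    rintro ω ⟨hBω, hω⟩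
    refine ⟨hBω, ?_⟩
    have hsp := hsplit ω
    have h2 : u < ∑ i ∈ range j, X i ω := hBω.2
    simp only [Set.mem_setOf_eq] at hω ⊢
    linarith
  have hsub2 : B ∩ {ω | 0 < T ω} ⊆ B ∩ {ω | u < ∑ i ∈ range n, X i ω} := by
    rintro ω ⟨hBω, hω⟩
    refine ⟨hBω, ?_⟩
    have hsp := hsplit ω
    have h2 : u < ∑ i ∈ range j, X i ω := hBω.2
    simp only [Set.mem_setOf_eq] at hω ⊢
    linarith
  calc μ (B ∩ {ω | ∑ i ∈ range n, X i ω ≤ u})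
      ≤ μ (B ∩ {ω | T ω < 0}) := measure_mono hsub1
    _ = μ B * μ {ω | T ω < 0} := key1
    _ = μ B * μ {ω | 0 < T ω} := by rw [hsym]
    _ = μ (B ∩ {ω | 0 < T ω}) := key2.symm
    _ ≤ μ (B ∩ {ω | u < ∑ i ∈ range n, X i ω}) := measure_mono hsub2

end Aux

theorem reflection_step
    {Ω : Type*} [MeasurableSpace Ω] (μ : Measure Ω) [IsProbabilityMeasure μ]
    (X : ℕ → Ω → ℝ)
    (hXmeas : ∀ k, Measurable (X k))
    (hXindep : iIndepFun X μ)
    (hXid : ∀ k, Measure.map (X k) μ = Measure.map (X 0) μ)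
    (hXsym : Measure.map (X 0) μ = Measure.map (fun ω => -X 0 ω) μ) :
    ∀ u : ℝ, 0 < u → ∀ n : ℕ, 2 ≤ n →
      (μ {ω | (∃ k ∈ Icc 1 (n - 1), ∑ i ∈ range k, X i ω > u)
            ∧ ∑ i ∈ range n, X i ω ≤ u}).toReal
        ≤ (μ {ω | ∑ i ∈ range n, X i ω > u}).toReal
            - (μ {ω | (∀ k ∈ Icc 1 (n - 1), ∑ i ∈ range k, X i ω ≤ u)
                ∧ ∑ i ∈ range n, X i ω > u}).toReal := by
  intro u hu n hn
  classical
  have hSm : ∀ k, Measurable fun ω => ∑ i ∈ range k, X i ω := fun k =>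
    Finset.measurable_sum _ fun i _ => hXmeas i
  set A : Set Ω := {ω | ∃ k ∈ Icc 1 (n - 1), ∑ i ∈ range k, X i ω > u} with hA
  set C : Set Ω := {ω | ∑ i ∈ range n, X i ω > u} with hC
  set D : Set Ω := {ω | ∑ i ∈ range n, X i ω ≤ u} with hD
  set B : ℕ → Set Ω := fun j => {ω | (∀ k ∈ Icc 1 (j - 1), ∑ i ∈ range k, X i ω ≤ u)
      ∧ u < ∑ i ∈ range j, X i ω} with hBdef
  have hCmeas : MeasurableSet C := (hSm n) measurableSet_Ioi
  have hAmeas : MeasurableSet A := by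
    have h : A = ⋃ k ∈ (Icc 1 (n - 1) : Finset ℕ),
        (fun ω => ∑ i ∈ range k, X i ω) ⁻¹' Set.Ioi u := by
      ext ω
      simp [hA]
    rw [h]
    exact MeasurableSet.biUnion (Finset.countable_toSet _)
      fun k _ => (hSm k) measurableSet_Ioi
  have hBmeas : ∀ j, MeasurableSet (B j) := by
    intro j
    have h : B j = (⋂ k ∈ (Icc 1 (j - 1) : Finset ℕ),
        (fun ω => ∑ i ∈ range k, X i ω) ⁻¹' Set.Iic u)
        ∩ ((fun ω => ∑ i ∈ range j, X i ω) ⁻¹' Set.Ioi u) := by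
      ext ω
      simp [hBdef]
    rw [h]
    exact (MeasurableSet.biInter (Finset.countable_toSet _)
      fun k _ => (hSm k) measurableSet_Iic).inter ((hSm j) measurableSet_Ioi)
  -- rewrite the right-hand side
  have hE : {ω | (∀ k ∈ Icc 1 (n - 1), ∑ i ∈ range k, X i ω ≤ u)
      ∧ ∑ i ∈ range n, X i ω > u} = Aᶜ ∩ C := by
    ext ω
    constructor
    · rintro ⟨h1, h2⟩
      refine ⟨?_, h2⟩
      intro hA'
      obtain ⟨k, hk, hk2⟩ := hA'
      exact absurd hk2 (not_lt.mpr (h1 k hk))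
    · rintro ⟨h1, h2⟩
      refine ⟨?_, h2⟩
      intro k hk
      by_contra h
      exact h1 ⟨k, hk, lt_of_not_ge h⟩
  have hCsplit : μ C = μ (A ∩ C) + μ (Aᶜ ∩ C) := by
    rw [← measure_union
      (Set.disjoint_left.mpr fun ω h1 h2 => h2.1 h1.1)
      (hAmeas.compl.inter hCmeas)]
    congr 1
    ext ω
    constructor
    · intro h
      by_cases hω : ω ∈ A
      · exact Or.inl ⟨hω, h⟩
      · exact Or.inr ⟨hω, h⟩
    · rintro (⟨_, h⟩ | ⟨_, h⟩) <;> exact h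
  have hRHS : (μ C).toReal - (μ (Aᶜ ∩ C)).toReal = (μ (A ∩ C)).toReal := by
    rw [hCsplit, ENNReal.toReal_add (measure_ne_top μ _) (measure_ne_top μ _)]
    ring
  have hLHS : {ω | (∃ k ∈ Icc 1 (n - 1), ∑ i ∈ range k, X i ω > u)
      ∧ ∑ i ∈ range n, X i ω ≤ u} = A ∩ D := rfl
  rw [hE, hLHS, hRHS]
  rw [ENNReal.toReal_le_toReal (measure_ne_top μ _) (measure_ne_top μ _)]
  -- decompose A into first passage events
  have hAun : ∀ E : Set Ω, A ∩ E = ⋃ j ∈ (Icc 1 (n - 1) : Finset ℕ), (B j ∩ E) := by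
    intro E
    ext ω
    simp only [Set.mem_inter_iff, Set.mem_iUnion, hA, hBdef, Set.mem_setOf_eq, exists_prop]
    constructor
    · rintro ⟨⟨k, hk, hku⟩, hE⟩
      have hex : ∃ p, u < ∑ i ∈ range p, X i ω := ⟨k, hku⟩
      have hjspec : u < ∑ i ∈ range (Nat.find hex), X i ω := Nat.find_spec hex
      have hjle : Nat.find hex ≤ k := Nat.find_min' hex hku
      have hj1 : 1 ≤ Nat.find hex := by
        by_contra h
        have hz : Nat.find hex = 0 := by omega
        rw [hz] at hjspec
        simp only [range_zero, Finset.sum_empty] at hjspec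
        linarith
      simp only [mem_Icc] at hk
      refine ⟨Nat.find hex, by simp only [mem_Icc]; omega, ⟨?_, hjspec⟩, hE⟩
      intro k' hk'
      simp only [mem_Icc] at hk'
      have hlt : k' < Nat.find hex := by omega
      exact not_lt.mp (Nat.find_min hex hlt)
    · rintro ⟨j, hj, ⟨_, hgt⟩, hE⟩
      exact ⟨⟨j, hj, hgt⟩, hE⟩
  have hpair : ∀ E : Set Ω,
      ((Icc 1 (n - 1) : Finset ℕ) : Set ℕ).PairwiseDisjoint (fun j => B j ∩ E) := by
    intro E i hi j hj hij
    refine Set.disjoint_left.mpr ?_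
    rintro ω ⟨hωi, _⟩ ⟨hωj, _⟩
    simp only [hBdef, Set.mem_setOf_eq] at hωi hωj
    simp only [Finset.coe_Icc, Set.mem_Icc] at hi hj
    rcases lt_or_gt_of_ne hij with h | h
    · have := hωj.1 i (by simp only [mem_Icc]; omega)
      exact absurd hωi.2 (not_lt.mpr this)
    · have := hωi.1 j (by simp only [mem_Icc]; omega)
      exact absurd hωj.2 (not_lt.mpr this)
  have hDmeas : MeasurableSet D := (hSm n) measurableSet_Iic
  calc μ (A ∩ D) = ∑ j ∈ Icc 1 (n - 1), μ (B j ∩ D) := by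
        rw [hAun D, measure_biUnion_finset (hpair D) fun j _ => (hBmeas j).inter hDmeas]
    _ ≤ ∑ j ∈ Icc 1 (n - 1), μ (B j ∩ C) := by
        apply Finset.sum_le_sum
        intro j hj
        simp only [mem_Icc] at hj
        have hj1 : 1 ≤ j := hj.1
        have hjn : j < n := by omega
        have := aux_key μ X hXmeas hXindep hXid hXsym u n j hj1 hjn
        simpa [hBdef, hC, hD] using this
    _ = μ (A ∩ C) := by
        rw [hAun C, measure_biUnion_finset (hpair C) fun j _ => (hBmeas j).inter hCmeas]
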